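/- Let A = {a_1, …, a_k} be a multi-set of k nonnegative integers, let A* be a sub-multi-set of A (identified with a subset of the index set {1, …, k}), let 0 ≤ s ≤ k, and let B be a multi-set of s integers sampled uniformly at random from A without replacement. Then for every real c ≥ 1, Pr[ |σ(B ∩ A*) − (s/k)·σ(A*)| > 4c·√|A*|·max(A*) ] ≤ exp(−c). -/

import Mathlib

open Finset Real

lemma exp_aux {d : ℝ} (hd : 0 ≤ d) : Real.exp d - 1 ≤ d / 2 * (Real.exp d + 1) := by
  have key : 0 ≤ (1 + d/2) * Real.exp (-(d/2)) - (1 - d/2) * Real.exp (d/2) := by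
    set f : ℝ → ℝ := fun y => (1 + y/2) * Real.exp (-(y/2)) - (1 - y/2) * Real.exp (y/2) with hf
    have hder : ∀ y : ℝ, HasDerivAt f (y/4 * (Real.exp (y/2) - Real.exp (-(y/2)))) y := by
      intro y
      have h1 : HasDerivAt (fun y : ℝ => 1 + y/2) (1/2) y := by
        simpa using ((hasDerivAt_id y).div_const 2).const_add 1
      have h2 : HasDerivAt (fun y : ℝ => 1 - y/2) (-(1/2)) y := by
        simpa using ((hasDerivAt_id y).div_const 2).const_sub 1
      have h3 : HasDerivAt (fun y : ℝ => Real.exp (-(y/2))) (Real.exp (-(y/2)) * (-(1/2))) y := by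
        simpa using (((hasDerivAt_id y).div_const 2).neg).exp
      have h4 : HasDerivAt (fun y : ℝ => Real.exp (y/2)) (Real.exp (y/2) * (1/2)) y := by
        simpa using ((hasDerivAt_id y).div_const 2).exp
      have := (h1.mul h3).sub (h2.mul h4)
      convert this using 1
      · rfl
      · rfl
      · rfl
      · ring
    have hmono : MonotoneOn f (Set.Ici 0) := by
      apply monotoneOn_of_deriv_nonneg (convex_Ici 0)
      · exact (Differentiable.continuous (fun y => (hder y).differentiableAt)).continuousOn
      · exact (Differentiable.differentiableOn (fun y => (hder y).differentiableAt))
      · intro x hx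
        rw [interior_Ici] at hx
        rw [(hder x).deriv]
        have : Real.exp (-(x/2)) ≤ Real.exp (x/2) := by
          apply Real.exp_le_exp.2; linarith [le_of_lt (Set.mem_Ioi.1 hx)]
        have hx' : (0:ℝ) < x := hx
        nlinarith
    have h0 : f 0 = 0 := by simp [hf]
    have := hmono (Set.self_mem_Ici) (Set.mem_Ici.2 hd) hd
    rw [h0] at this
    simpa [hf] using this
  -- multiply key by exp(d/2) > 0
  have hpos : (0:ℝ) < Real.exp (d/2) := Real.exp_pos _
  have h2 : 0 ≤ ((1 + d/2) * Real.exp (-(d/2)) - (1 - d/2) * Real.exp (d/2)) * Real.exp (d/2) :=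
    mul_nonneg key hpos.le
  have e1 : Real.exp (-(d/2)) * Real.exp (d/2) = 1 := by
    rw [← Real.exp_add]; simp
  have e2 : Real.exp (d/2) * Real.exp (d/2) = Real.exp d := by
    rw [← Real.exp_add]; ring_nf
  nlinarith [h2, e1, e2]

lemma pair_ineq {l u v : ℝ} (hl : 0 ≤ l) :
    (u - v) * (Real.exp (l*u) - Real.exp (l*v)) ≤ l/2 * (u-v)^2 * (Real.exp (l*u) + Real.exp (l*v)) := by
  rcases le_total v u with h | h
  · have hd : 0 ≤ l * (u - v) := mul_nonneg hl (by linarith)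
    have := exp_aux hd
    have hev : (0:ℝ) < Real.exp (l*v) := Real.exp_pos _
    have key : Real.exp (l*u) - Real.exp (l*v) ≤ l*(u-v)/2 * (Real.exp (l*u) + Real.exp (l*v)) := by
      have h2 := mul_le_mul_of_nonneg_left this hev.le
      have e1 : Real.exp (l*v) * Real.exp (l*(u-v)) = Real.exp (l*u) := by
        rw [← Real.exp_add]; ring_nf
      nlinarith [h2, e1]
    have huv : 0 ≤ u - v := by linarith
    nlinarith [mul_le_mul_of_nonneg_left key huv]
  · have hd : 0 ≤ l * (v - u) := mul_nonneg hl (by linarith)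
    have := exp_aux hd
    have hev : (0:ℝ) < Real.exp (l*u) := Real.exp_pos _
    have key : Real.exp (l*v) - Real.exp (l*u) ≤ l*(v-u)/2 * (Real.exp (l*v) + Real.exp (l*u)) := by
      have h2 := mul_le_mul_of_nonneg_left this hev.le
      have e1 : Real.exp (l*u) * Real.exp (l*(v-u)) = Real.exp (l*v) := by
        rw [← Real.exp_add]; ring_nf
      nlinarith [h2, e1]
    have huv : 0 ≤ v - u := by linarith
    nlinarith [mul_le_mul_of_nonneg_left key huv]

variable {k : ℕ}

def QQ (k s : ℕ) : Finset (Finset (Fin k) × Fin k × Fin k) :=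
  ((powersetCard s (univ : Finset (Fin k))) ×ˢ ((univ : Finset (Fin k)) ×ˢ univ)).filter
    (fun p => p.2.1 ∈ p.1 ∧ p.2.2 ∉ p.1)

lemma mem_QQ {s : ℕ} {p : Finset (Fin k) × Fin k × Fin k} :
    p ∈ QQ k s ↔ p.1.card = s ∧ p.2.1 ∈ p.1 ∧ p.2.2 ∉ p.1 := by
  simp only [QQ, Finset.mem_filter, Finset.mem_powersetCard, Finset.mem_product,
    Finset.mem_univ, true_and, Finset.subset_univ]
  tauto

def iot (p : Finset (Fin k) × Fin k × Fin k) : Finset (Fin k) × Fin k × Fin k :=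
  (insert p.2.2 (p.1.erase p.2.1), p.2.2, p.2.1)

lemma iot_mem {s : ℕ} {p : Finset (Fin k) × Fin k × Fin k} (hp : p ∈ QQ k s) :
    iot p ∈ QQ k s := by
  obtain ⟨hcard, hi, hj⟩ := mem_QQ.1 hp
  obtain ⟨T, i, j⟩ := p
  simp only at hcard hi hj
  have hne : j ≠ i := fun h => hj (h ▸ hi)
  have hjni : j ∉ T.erase i := fun h => hj (Finset.mem_of_mem_erase h)
  rw [mem_QQ]
  refine ⟨?_, ?_, ?_⟩
  · simp only [iot]
    rw [Finset.card_insert_of_notMem hjni, Finset.card_erase_of_mem hi]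
    have : 1 ≤ T.card := Finset.card_pos.2 ⟨i, hi⟩
    omega
  · simp [iot]
  · simp only [iot, Finset.mem_insert]
    push_neg
    exact ⟨fun h => hne h.symm, fun h => (Finset.notMem_erase i T) h⟩

lemma iot_iot {s : ℕ} {p : Finset (Fin k) × Fin k × Fin k} (hp : p ∈ QQ k s) :
    iot (iot p) = p := by
  obtain ⟨hcard, hi, hj⟩ := mem_QQ.1 hp
  obtain ⟨T, i, j⟩ := p
  simp only at hcard hi hj
  have hjni : j ∉ T.erase i := fun h => hj (Finset.mem_of_mem_erase h)
  simp only [iot]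
  ext1
  · simp only
    rw [Finset.erase_insert hjni, Finset.insert_erase hi]
  · rfl

lemma reindexQ {s : ℕ} (F : Finset (Fin k) × Fin k × Fin k → ℝ) :
    ∑ p ∈ QQ k s, F p = ∑ p ∈ QQ k s, F (iot p) := by
  exact Finset.sum_nbij' iot iot (fun p hp => iot_mem hp) (fun p hp => iot_mem hp)
    (fun p hp => iot_iot hp) (fun p hp => iot_iot hp) (fun p hp => (congrArg F (iot_iot hp)).symm)

lemma sumQ {s : ℕ} (F : Finset (Fin k) × Fin k × Fin k → ℝ) :
    ∑ p ∈ QQ k s, F p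
      = ∑ T ∈ powersetCard s (univ : Finset (Fin k)), ∑ i ∈ T, ∑ j ∈ Tᶜ, F (T, i, j) := by
  rw [QQ, Finset.sum_filter, Finset.sum_product]
  refine Finset.sum_congr rfl (fun T _ => ?_)
  rw [Finset.sum_product]
  have hinner : ∀ x : Fin k, (∑ y : Fin k, if x ∈ T ∧ y ∉ T then F (T,x,y) else 0)
      = if x ∈ T then ∑ j ∈ Tᶜ, F (T,x,j) else 0 := by
    intro x
    by_cases hx : x ∈ T
    · simp only [hx, true_and, if_true]
      simp only [← Finset.mem_compl]
      rw [Finset.sum_ite_mem, Finset.univ_inter]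
    · simp [hx]
  simp only [hinner]
  rw [Finset.sum_ite_mem, Finset.univ_inter]

lemma perT {s : ℕ} (hs : s ≤ k) (hk : 0 < k) (w : Fin k → ℝ) {T : Finset (Fin k)}
    (hT : T ∈ powersetCard s (univ : Finset (Fin k))) :
    ∑ i ∈ T, ∑ j ∈ Tᶜ, (w i - w j)
      = (k:ℝ) * ((∑ i ∈ T, w i) - ((s:ℝ)/(k:ℝ)) * ∑ i, w i) := by
  obtain ⟨-, hcard⟩ := Finset.mem_powersetCard.1 hT
  have hcc : (Tᶜ.card : ℝ) = (k:ℝ) - (s:ℝ) := by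
    rw [Finset.card_compl, hcard, Fintype.card_fin, Nat.cast_sub hs]
  have h1 : ∀ i : Fin k, ∑ j ∈ Tᶜ, (w i - w j) = (Tᶜ.card : ℝ) * w i - ∑ j ∈ Tᶜ, w j := by
    intro i
    rw [Finset.sum_sub_distrib, Finset.sum_const, nsmul_eq_mul]
  have hσ : ∑ j ∈ Tᶜ, w j = (∑ i, w i) - ∑ i ∈ T, w i := by
    have := Finset.sum_compl_add_sum T w
    linarith
  simp only [h1]
  rw [Finset.sum_sub_distrib, ← Finset.mul_sum, Finset.sum_const, nsmul_eq_mul, hcard, hcc, hσ]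
  have hk' : (k:ℝ) ≠ 0 := Nat.cast_ne_zero.2 hk.ne'
  field_simp
  ring

lemma sqsum_bound (w : Fin k → ℝ) (S : Finset (Fin k)) (M : ℝ)
    (hw0 : ∀ i, i ∉ S → w i = 0) (hww : ∀ i j, (w i - w j)^2 ≤ M^2)
    (T : Finset (Fin k)) :
    ∑ i ∈ T, ∑ j ∈ Tᶜ, (w i - w j)^2 ≤ (S.card : ℝ) * k * M^2 := by
  have hM2 : (0:ℝ) ≤ M^2 := sq_nonneg M
  have step : ∀ i ∈ T, ∀ j ∈ Tᶜ, (w i - w j)^2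
      ≤ M^2 * ((if i ∈ S then (1:ℝ) else 0) + (if j ∈ S then (1:ℝ) else 0)) := by
    intro i _ j _
    by_cases hi : i ∈ S
    · by_cases hj : j ∈ S <;> simp only [hi, hj, if_true, if_false] <;> nlinarith [hww i j]
    · by_cases hj : j ∈ S
      · simp only [hi, hj, if_true, if_false]; nlinarith [hww i j]
      · simp [hi, hj, hw0 i hi, hw0 j hj]
  have h1 : ∑ i ∈ T, ∑ j ∈ Tᶜ, (w i - w j)^2
      ≤ ∑ i ∈ T, ∑ j ∈ Tᶜ, M^2 * ((if i ∈ S then (1:ℝ) else 0) + (if j ∈ S then (1:ℝ) else 0)) :=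
    Finset.sum_le_sum (fun i hi => Finset.sum_le_sum (fun j hj => step i hi j hj))
  refine h1.trans ?_
  have e1 : ∑ i ∈ T, (if i ∈ S then (1:ℝ) else 0) = ((T ∩ S).card : ℝ) := by
    rw [Finset.sum_ite_mem, Finset.sum_const, nsmul_eq_mul, mul_one]
  have e2 : ∑ j ∈ Tᶜ, (if j ∈ S then (1:ℝ) else 0) = ((Tᶜ ∩ S).card : ℝ) := by
    rw [Finset.sum_ite_mem, Finset.sum_const, nsmul_eq_mul, mul_one]
  have A1 : ∑ i ∈ T, ∑ j ∈ Tᶜ, M^2 * (if i ∈ S then (1:ℝ) else 0)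
      = (Tᶜ.card : ℝ) * (M^2 * ((T ∩ S).card : ℝ)) := by
    have inner : ∀ i : Fin k, ∑ _j ∈ Tᶜ, M^2 * (if i ∈ S then (1:ℝ) else 0)
        = (Tᶜ.card : ℝ) * (M^2 * (if i ∈ S then (1:ℝ) else 0)) := by
      intro i; rw [Finset.sum_const, nsmul_eq_mul]
    simp only [inner]
    rw [← Finset.mul_sum, ← Finset.mul_sum, e1]
  have A2 : ∑ i ∈ T, ∑ j ∈ Tᶜ, M^2 * (if j ∈ S then (1:ℝ) else 0)
      = (T.card : ℝ) * (M^2 * ((Tᶜ ∩ S).card : ℝ)) := by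
    have inner : ∑ j ∈ Tᶜ, M^2 * (if j ∈ S then (1:ℝ) else 0)
        = M^2 * ((Tᶜ ∩ S).card : ℝ) := by
      rw [← Finset.mul_sum, e2]
    simp only [inner, Finset.sum_const, nsmul_eq_mul]
  have key : ∑ i ∈ T, ∑ j ∈ Tᶜ, M^2 * ((if i ∈ S then (1:ℝ) else 0) + (if j ∈ S then (1:ℝ) else 0))
      = (Tᶜ.card : ℝ) * (M^2 * ((T ∩ S).card : ℝ)) + (T.card : ℝ) * (M^2 * ((Tᶜ ∩ S).card : ℝ)) := by
    rw [← A1, ← A2, ← Finset.sum_add_distrib]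
    refine Finset.sum_congr rfl (fun i _ => ?_)
    rw [← Finset.sum_add_distrib]
    refine Finset.sum_congr rfl (fun j _ => ?_)
    ring
  rw [key]
  have hc1 : (T ∩ S).card + (Tᶜ ∩ S).card = S.card := by
    have hST : S ∩ Tᶜ = S \ T := by ext x; simp [Finset.mem_sdiff, Finset.mem_compl, and_comm]
    rw [Finset.inter_comm T S, Finset.inter_comm Tᶜ S, hST]
    exact Finset.card_inter_add_card_sdiff S T
  have hb1 : (Tᶜ.card : ℝ) ≤ (k:ℝ) := by
    have : Tᶜ.card ≤ k := by simpa using Finset.card_le_univ (Tᶜ : Finset (Fin k))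
    exact_mod_cast this
  have hb2 : (T.card : ℝ) ≤ (k:ℝ) := by
    have : T.card ≤ k := by simpa using Finset.card_le_univ T
    exact_mod_cast this
  have hc1' : ((T ∩ S).card : ℝ) + ((Tᶜ ∩ S).card : ℝ) = (S.card : ℝ) := by exact_mod_cast hc1
  have p1 : (0:ℝ) ≤ ((T ∩ S).card : ℝ) := Nat.cast_nonneg _
  have p2 : (0:ℝ) ≤ ((Tᶜ ∩ S).card : ℝ) := Nat.cast_nonneg _
  have hA : (Tᶜ.card : ℝ) * ((T ∩ S).card : ℝ) + (T.card : ℝ) * ((Tᶜ ∩ S).card : ℝ)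
      ≤ ((S.card : ℝ)) * (k:ℝ) := by nlinarith
  nlinarith [mul_le_mul_of_nonneg_left hA hM2]

lemma Wshift {s : ℕ} (w : Fin k → ℝ) (Wf : Finset (Fin k) → ℝ)
    (hWf : ∀ T, Wf T = (∑ i ∈ T, w i) - ((s:ℝ)/(k:ℝ)) * ∑ i, w i)
    {p : Finset (Fin k) × Fin k × Fin k} (hp : p ∈ QQ k s) :
    Wf p.1 - Wf (iot p).1 = w p.2.1 - w p.2.2 := by
  obtain ⟨hcard, hi, hj⟩ := mem_QQ.1 hp
  simp only [hWf, iot]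
  have h1 : ∑ i ∈ insert p.2.2 (p.1.erase p.2.1), w i
      = w p.2.2 + ∑ i ∈ p.1.erase p.2.1, w i :=
    Finset.sum_insert (fun h => hj (Finset.mem_of_mem_erase h))
  have h2 : ∑ i ∈ p.1.erase p.2.1, w i + w p.2.1 = ∑ i ∈ p.1, w i :=
    Finset.sum_erase_add _ _ hi
  rw [h1]
  linarith

lemma core {s : ℕ} (hs : s ≤ k) (hk : 0 < k) (w : Fin k → ℝ) (S : Finset (Fin k)) (M : ℝ)
    (hw0 : ∀ i, i ∉ S → w i = 0) (hww : ∀ i j, (w i - w j)^2 ≤ M^2)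
    (Wf : Finset (Fin k) → ℝ)
    (hWf : ∀ T, Wf T = (∑ i ∈ T, w i) - ((s:ℝ)/(k:ℝ)) * ∑ i, w i)
    {l : ℝ} (hl : 0 ≤ l) :
    ∑ T ∈ powersetCard s (univ : Finset (Fin k)), Wf T * Real.exp (l * Wf T)
      ≤ (S.card : ℝ) * M^2 / 2 * l *
        ∑ T ∈ powersetCard s (univ : Finset (Fin k)), Real.exp (l * Wf T) := by
  have hkpos : (0:ℝ) < (k:ℝ) := by exact_mod_cast hk
  rw [← mul_le_mul_iff_right₀ hkpos]
  have e0 : (k:ℝ) * ∑ T ∈ powersetCard s (univ : Finset (Fin k)), Wf T * Real.exp (l * Wf T)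
      = ∑ p ∈ QQ k s, (w p.2.1 - w p.2.2) * Real.exp (l * Wf p.1) := by
    rw [sumQ, Finset.mul_sum]
    refine Finset.sum_congr rfl (fun T hT => ?_)
    have hper := perT hs hk w hT
    simp only [← Finset.sum_mul]
    rw [hper, hWf]
    ring
  rw [e0]
  -- reindexing identity
  have e1 : ∑ p ∈ QQ k s, (w p.2.1 - w p.2.2) * Real.exp (l * Wf p.1)
      = ∑ p ∈ QQ k s, (w p.2.2 - w p.2.1) * Real.exp (l * Wf (iot p).1) := by
    simpa [iot] using reindexQ (s := s) (fun p => (w p.2.1 - w p.2.2) * Real.exp (l * Wf p.1))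
  have e2 : ∑ p ∈ QQ k s, (w p.2.1 - w p.2.2) * Real.exp (l * Wf p.1)
      = (1/2) * ∑ p ∈ QQ k s, (Wf p.1 - Wf (iot p).1)
          * (Real.exp (l * Wf p.1) - Real.exp (l * Wf (iot p).1)) := by
    have h2 : ∑ p ∈ QQ k s, (Wf p.1 - Wf (iot p).1)
          * (Real.exp (l * Wf p.1) - Real.exp (l * Wf (iot p).1))
        = ∑ p ∈ QQ k s, ((w p.2.1 - w p.2.2) * Real.exp (l * Wf p.1)
            + (w p.2.2 - w p.2.1) * Real.exp (l * Wf (iot p).1)) := by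
      refine Finset.sum_congr rfl (fun p hp => ?_)
      rw [Wshift w Wf hWf hp]
      ring
    rw [h2, Finset.sum_add_distrib, ← e1]
    ring
  rw [e2]
  -- pointwise convexity bound
  have e3 : ∑ p ∈ QQ k s, (Wf p.1 - Wf (iot p).1)
        * (Real.exp (l * Wf p.1) - Real.exp (l * Wf (iot p).1))
      ≤ ∑ p ∈ QQ k s, l/2 * (w p.2.1 - w p.2.2)^2
          * (Real.exp (l * Wf p.1) + Real.exp (l * Wf (iot p).1)) := by
    refine Finset.sum_le_sum (fun p hp => ?_)
    have := pair_ineq (l := l) (u := Wf p.1) (v := Wf (iot p).1) hl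
    rw [Wshift w Wf hWf hp] at this
    convert this using 2
    · rfl
    rw [← Wshift w Wf hWf hp]
  -- second reindexing: move exp back to p.1
  have e4 : ∑ p ∈ QQ k s, (w p.2.1 - w p.2.2)^2 * Real.exp (l * Wf (iot p).1)
      = ∑ p ∈ QQ k s, (w p.2.1 - w p.2.2)^2 * Real.exp (l * Wf p.1) := by
    have := reindexQ (s := s) (fun p => (w p.2.1 - w p.2.2)^2 * Real.exp (l * Wf p.1))
    simp only [iot] at this ⊢
    rw [this]
    refine Finset.sum_congr rfl (fun p hp => ?_)
    ring_nf
  -- squared-sum bound per T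
  have e5 : ∑ p ∈ QQ k s, (w p.2.1 - w p.2.2)^2 * Real.exp (l * Wf p.1)
      ≤ (S.card : ℝ) * (k:ℝ) * M^2 *
          ∑ T ∈ powersetCard s (univ : Finset (Fin k)), Real.exp (l * Wf T) := by
    rw [sumQ, Finset.mul_sum]
    refine Finset.sum_le_sum (fun T hT => ?_)
    simp only [← Finset.sum_mul]
    exact mul_le_mul_of_nonneg_right (sqsum_bound w S M hw0 hww T) (Real.exp_pos _).le
  have e6 : ∑ p ∈ QQ k s, l/2 * (w p.2.1 - w p.2.2)^2
        * (Real.exp (l * Wf p.1) + Real.exp (l * Wf (iot p).1))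
      = l/2 * (∑ p ∈ QQ k s, (w p.2.1 - w p.2.2)^2 * Real.exp (l * Wf p.1)
          + ∑ p ∈ QQ k s, (w p.2.1 - w p.2.2)^2 * Real.exp (l * Wf (iot p).1)) := by
    rw [← Finset.sum_add_distrib, Finset.mul_sum]
    refine Finset.sum_congr rfl (fun p hp => ?_)
    ring
  have hsum_pos : (0:ℝ) ≤ ∑ p ∈ QQ k s, (w p.2.1 - w p.2.2)^2 * Real.exp (l * Wf p.1) :=
    Finset.sum_nonneg (fun p _ => mul_nonneg (sq_nonneg _) (Real.exp_pos _).le)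
  have final : (1/2 : ℝ) * ∑ p ∈ QQ k s, (Wf p.1 - Wf (iot p).1)
        * (Real.exp (l * Wf p.1) - Real.exp (l * Wf (iot p).1))
      ≤ l/2 * ∑ p ∈ QQ k s, (w p.2.1 - w p.2.2)^2 * Real.exp (l * Wf p.1) := by
    have h := e3
    rw [e6, e4] at h
    nlinarith [h]
  refine final.trans ?_
  have h5 := mul_le_mul_of_nonneg_left e5 (by linarith : (0:ℝ) ≤ l/2)
  refine h5.trans_eq ?_
  ring

lemma mgf_bound {s : ℕ} (hs : s ≤ k) (hk : 0 < k) (w : Fin k → ℝ) (S : Finset (Fin k)) (M : ℝ)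
    (hw0 : ∀ i, i ∉ S → w i = 0) (hww : ∀ i j, (w i - w j)^2 ≤ M^2)
    (Wf : Finset (Fin k) → ℝ)
    (hWf : ∀ T, Wf T = (∑ i ∈ T, w i) - ((s:ℝ)/(k:ℝ)) * ∑ i, w i)
    {l : ℝ} (hl : 0 ≤ l) :
    ∑ T ∈ powersetCard s (univ : Finset (Fin k)), Real.exp (l * Wf T)
      ≤ ((powersetCard s (univ : Finset (Fin k))).card : ℝ)
        * Real.exp ((S.card : ℝ) * M^2 / 4 * l^2) := by
  set C : ℝ := (S.card : ℝ) * M^2 with hC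
  set g : ℝ → ℝ := fun x => (∑ T ∈ powersetCard s (univ : Finset (Fin k)), Real.exp (x * Wf T))
      * Real.exp (-(C/4 * x^2)) with hg
  have hder : ∀ x : ℝ, HasDerivAt g
      ((∑ T ∈ powersetCard s (univ : Finset (Fin k)), Wf T * Real.exp (x * Wf T))
          * Real.exp (-(C/4 * x^2))
        + (∑ T ∈ powersetCard s (univ : Finset (Fin k)), Real.exp (x * Wf T))
          * (Real.exp (-(C/4 * x^2)) * (-(C/4 * (2*x))))) x := by
    intro x
    have hm : HasDerivAt (fun x : ℝ => ∑ T ∈ powersetCard s (univ : Finset (Fin k)), Real.exp (x * Wf T))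
        (∑ T ∈ powersetCard s (univ : Finset (Fin k)), Wf T * Real.exp (x * Wf T)) x := by
      apply HasDerivAt.fun_sum
      intro T _
      simpa [mul_comm] using (hasDerivAt_mul_const (Wf T) (x := x)).exp
    have h1 : HasDerivAt (fun x : ℝ => -(C/4 * x^2)) (-(C/4 * (2*x))) x := by
      have := ((hasDerivAt_pow 2 x).const_mul (C/4)).neg
      simpa [mul_comm, mul_assoc, Pi.neg_def] using this
    exact hm.mul h1.exp
  have hanti : AntitoneOn g (Set.Ici 0) := by
    apply antitoneOn_of_deriv_nonpos (convex_Ici 0)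
    · exact (Differentiable.continuous (fun x => (hder x).differentiableAt)).continuousOn
    · exact fun x _ => ((hder x).differentiableAt).differentiableWithinAt
    · intro x hx
      rw [interior_Ici] at hx
      rw [(hder x).deriv]
      have hcore := core hs hk w S M hw0 hww Wf hWf (le_of_lt hx)
      have hexp : (0:ℝ) < Real.exp (-(C/4 * x^2)) := Real.exp_pos _
      have hmul := mul_le_mul_of_nonneg_right hcore hexp.le
      rw [← hC] at hmul
      nlinarith [hmul]
  have h0 : g 0 = ((powersetCard s (univ : Finset (Fin k))).card : ℝ) := by
    simp [hg]
  have hle : g l ≤ ((powersetCard s (univ : Finset (Fin k))).card : ℝ) := by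
    rw [← h0]
    exact hanti Set.self_mem_Ici (Set.mem_Ici.2 hl) hl
  rw [hg] at hle
  have hxx : Real.exp (-(C/4 * l^2)) * Real.exp (C/4 * l^2) = 1 := by
    rw [← Real.exp_add]; simp
  calc ∑ T ∈ powersetCard s (univ : Finset (Fin k)), Real.exp (l * Wf T)
      = ((∑ T ∈ powersetCard s (univ : Finset (Fin k)), Real.exp (l * Wf T))
          * Real.exp (-(C/4 * l^2))) * Real.exp (C/4 * l^2) := by
        rw [mul_assoc, hxx, mul_one]
    _ ≤ ((powersetCard s (univ : Finset (Fin k))).card : ℝ) * Real.exp (C/4 * l^2) :=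
        mul_le_mul_of_nonneg_right hle (Real.exp_pos _).le
    _ = ((powersetCard s (univ : Finset (Fin k))).card : ℝ)
          * Real.exp ((S.card : ℝ) * M^2 / 4 * l^2) := by
        rw [hC]

lemma chernoff {s : ℕ} (hs : s ≤ k) (hk : 0 < k) (w : Fin k → ℝ) (S : Finset (Fin k)) (M : ℝ)
    (hw0 : ∀ i, i ∉ S → w i = 0) (hww : ∀ i j, (w i - w j)^2 ≤ M^2)
    (Wf : Finset (Fin k) → ℝ)
    (hWf : ∀ T, Wf T = (∑ i ∈ T, w i) - ((s:ℝ)/(k:ℝ)) * ∑ i, w i)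
    (t : ℝ) (ht : 0 < t) (hCpos : 0 < (S.card : ℝ) * M^2) :
    (((powersetCard s (univ : Finset (Fin k))).filter (fun T => t < Wf T)).card : ℝ)
      ≤ ((powersetCard s (univ : Finset (Fin k))).card : ℝ)
        * Real.exp (-(t^2 / ((S.card : ℝ) * M^2))) := by
  set C : ℝ := (S.card : ℝ) * M^2 with hC
  set l : ℝ := 2*t/C with hlo
  have hl : 0 ≤ l := by positivity
  have h1 : (((powersetCard s (univ : Finset (Fin k))).filter (fun T => t < Wf T)).card : ℝ)
        * Real.exp (l * t)
      ≤ ∑ T ∈ powersetCard s (univ : Finset (Fin k)), Real.exp (l * Wf T) := by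
    calc (((powersetCard s (univ : Finset (Fin k))).filter (fun T => t < Wf T)).card : ℝ)
          * Real.exp (l * t)
        = ∑ _T ∈ (powersetCard s (univ : Finset (Fin k))).filter (fun T => t < Wf T),
            Real.exp (l * t) := by rw [Finset.sum_const, nsmul_eq_mul]
      _ ≤ ∑ T ∈ (powersetCard s (univ : Finset (Fin k))).filter (fun T => t < Wf T),
            Real.exp (l * Wf T) := by
          refine Finset.sum_le_sum (fun T hT => ?_)
          have := (Finset.mem_filter.1 hT).2
          exact Real.exp_le_exp.2 (mul_le_mul_of_nonneg_left this.le hl)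
      _ ≤ ∑ T ∈ powersetCard s (univ : Finset (Fin k)), Real.exp (l * Wf T) :=
          Finset.sum_le_sum_of_subset_of_nonneg (Finset.filter_subset _ _)
            (fun _ _ _ => (Real.exp_pos _).le)
  have h2 := mgf_bound hs hk w S M hw0 hww Wf hWf hl
  rw [← hC] at h2
  have hxx : Real.exp (l * t) * Real.exp (-(l * t)) = 1 := by
    rw [← Real.exp_add]; simp
  have hCne : C ≠ 0 := ne_of_gt hCpos
  calc (((powersetCard s (univ : Finset (Fin k))).filter (fun T => t < Wf T)).card : ℝ)
      = ((((powersetCard s (univ : Finset (Fin k))).filter (fun T => t < Wf T)).card : ℝ)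
          * Real.exp (l * t)) * Real.exp (-(l * t)) := by
        rw [mul_assoc, hxx, mul_one]
    _ ≤ (((powersetCard s (univ : Finset (Fin k))).card : ℝ) * Real.exp (C / 4 * l^2))
          * Real.exp (-(l * t)) :=
        mul_le_mul_of_nonneg_right (h1.trans h2) (Real.exp_pos _).le
    _ = ((powersetCard s (univ : Finset (Fin k))).card : ℝ)
          * Real.exp (C / 4 * l^2 + -(l * t)) := by
        rw [mul_assoc, ← Real.exp_add]
    _ = ((powersetCard s (univ : Finset (Fin k))).card : ℝ)
          * Real.exp (-(t^2 / C)) := by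
        congr 1
        rw [hlo]
        field_simp
        ring

lemma numeric_step (c : ℝ) (hc : 1 ≤ c) :
    2 * Real.exp (-(16 * c^2)) ≤ Real.exp (-c) := by
  have he1 : (2:ℝ) ≤ Real.exp (16 * c^2 - c) := by
    have ha : (2:ℝ) ≤ Real.exp 1 := by
      have := Real.add_one_le_exp 1
      linarith
    refine ha.trans (Real.exp_le_exp.2 ?_)
    nlinarith
  have hmm := mul_le_mul_of_nonneg_right he1 (Real.exp_pos (-(16 * c^2))).le
  rw [← Real.exp_add] at hmm
  have heq : 16 * c^2 - c + -(16 * c^2) = -c := by ring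
  rw [heq] at hmm
  exact hmm

/-- Let `A = {a 1, …, a k}` be a multiset of `k` nonnegative integers,
let `A*` be a sub-multiset of `A` identified with an index set `T* ⊆ {1, …, k}`, let
`0 ≤ s ≤ k`, and let `B` be a uniformly random `s`-element sub(multi)set of `A`
(chosen via a uniformly random `s`-element index set `T`). Then for every `c ≥ 1`,
`Pr[|σ(B ∩ A*) − (s/k)·σ(A*)| > 4c·√|A*|·max(A*)] ≤ exp(−c)`. -/
theorem stmt7 (k s : ℕ) (hs : s ≤ k) (a : Fin k → ℕ) (Tstar : Finset (Fin k))
    (c : ℝ) (hc : 1 ≤ c) :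
    (((Finset.powersetCard s (Finset.univ : Finset (Fin k))).filter fun T =>
        4 * c * Real.sqrt (Tstar.card) * ((Tstar.sup a : ℕ) : ℝ) <
          |(∑ i ∈ T ∩ Tstar, (a i : ℝ)) - (s / k : ℝ) * ∑ i ∈ Tstar, (a i : ℝ)|).card : ℝ) /
      ((Finset.powersetCard s (Finset.univ : Finset (Fin k))).card : ℝ)
      ≤ Real.exp (-c) := by
  by_cases hM0 : Tstar.sup a = 0
  · have hz : ∀ i ∈ Tstar, a i = 0 := by
      simpa using (Finset.sup_eq_bot_iff a Tstar).1 hM0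
    have hempty : ((Finset.powersetCard s (Finset.univ : Finset (Fin k))).filter fun T =>
        4 * c * Real.sqrt (Tstar.card) * ((Tstar.sup a : ℕ) : ℝ) <
          |(∑ i ∈ T ∩ Tstar, (a i : ℝ)) - (s / k : ℝ) * ∑ i ∈ Tstar, (a i : ℝ)|).card = 0 := by
      rw [Finset.card_eq_zero, Finset.filter_eq_empty_iff]
      intro T _
      have h1 : ∑ i ∈ T ∩ Tstar, (a i : ℝ) = 0 :=
        Finset.sum_eq_zero (fun i hi => by rw [hz i (Finset.mem_inter.1 hi).2]; simp)
      have h2 : ∑ i ∈ Tstar, (a i : ℝ) = 0 :=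
        Finset.sum_eq_zero (fun i hi => by rw [hz i hi]; simp)
      rw [h1, h2, hM0]
      simp
    rw [hempty]
    simp only [Nat.cast_zero, zero_div]
    exact (Real.exp_pos _).le
  · -- main case
    have hTne : Tstar.Nonempty := by
      rcases Finset.eq_empty_or_nonempty Tstar with h | h
      · exact absurd (by simp [h]) hM0
      · exact h
    have hk : 0 < k := (hTne.choose).pos
    have hn1 : 1 ≤ Tstar.card := Finset.card_pos.2 hTne
    have hM1 : 1 ≤ Tstar.sup a := Nat.one_le_iff_ne_zero.2 hM0
    set M : ℝ := ((Tstar.sup a : ℕ) : ℝ) with hMdef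
    set nr : ℝ := ((Tstar.card : ℕ) : ℝ) with hndef
    have hMpos : (0:ℝ) < M := by rw [hMdef]; exact_mod_cast hM1
    have hnpos : (0:ℝ) < nr := by rw [hndef]; exact_mod_cast hn1
    set w : Fin k → ℝ := fun i => if i ∈ Tstar then (a i : ℝ) else 0 with hwdef
    have hb : ∀ i, 0 ≤ w i ∧ w i ≤ M := by
      intro i
      rw [hwdef]
      by_cases hi : i ∈ Tstar
      · simp only [hi, if_true]
        refine ⟨Nat.cast_nonneg _, ?_⟩
        rw [hMdef]
        exact_mod_cast Finset.le_sup (f := a) hi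
      · simp only [hi, if_false]
        exact ⟨le_refl 0, hMpos.le⟩
    have hww : ∀ i j, (w i - w j)^2 ≤ M^2 := by
      intro i j
      obtain ⟨h1, h2⟩ := hb i
      obtain ⟨h3, h4⟩ := hb j
      nlinarith
    have hw0 : ∀ i, i ∉ Tstar → w i = 0 := fun i hi => by rw [hwdef]; simp [hi]
    set Wf : Finset (Fin k) → ℝ :=
      fun T => (∑ i ∈ T, w i) - ((s:ℝ)/(k:ℝ)) * ∑ i, w i with hWfdef
    have hWf : ∀ T, Wf T = (∑ i ∈ T, w i) - ((s:ℝ)/(k:ℝ)) * ∑ i, w i := fun T => rfl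
    have hXT : ∀ T : Finset (Fin k), ∑ i ∈ T, w i = ∑ i ∈ T ∩ Tstar, (a i : ℝ) := by
      intro T
      rw [hwdef]
      exact Finset.sum_ite_mem T Tstar _
    have hXU : ∑ i, w i = ∑ i ∈ Tstar, (a i : ℝ) := by
      rw [hwdef]
      rw [Finset.sum_ite_mem, Finset.univ_inter]
    set t : ℝ := 4 * c * Real.sqrt nr * M with htdef
    have hsq : 0 < Real.sqrt nr := Real.sqrt_pos.2 hnpos
    have ht : 0 < t := by rw [htdef]; positivity
    have hCpos : (0:ℝ) < (Tstar.card : ℝ) * M^2 := by positivity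
    -- upper tail
    have hup := chernoff hs hk w Tstar M hw0 hww Wf hWf t ht hCpos
    -- lower tail
    have hww' : ∀ i j, ((-w i) - (-w j))^2 ≤ M^2 := by
      intro i j
      have := hww j i
      nlinarith
    have hw0' : ∀ i, i ∉ Tstar → -w i = 0 := fun i hi => by rw [hw0 i hi]; ring
    have hWf' : ∀ T, -Wf T = (∑ i ∈ T, -w i) - ((s:ℝ)/(k:ℝ)) * ∑ i, -w i := by
      intro T
      rw [hWf T]
      simp only [Finset.sum_neg_distrib]
      ring
    have hdown := chernoff hs hk (fun i => -w i) Tstar M hw0' hww' (fun T => -Wf T) hWf' t ht hCpos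
    -- combine
    have hsub : ((Finset.powersetCard s (Finset.univ : Finset (Fin k))).filter fun T =>
          4 * c * Real.sqrt (Tstar.card) * ((Tstar.sup a : ℕ) : ℝ) <
            |(∑ i ∈ T ∩ Tstar, (a i : ℝ)) - (s / k : ℝ) * ∑ i ∈ Tstar, (a i : ℝ)|)
        ⊆ ((powersetCard s (univ : Finset (Fin k))).filter (fun T => t < Wf T))
          ∪ ((powersetCard s (univ : Finset (Fin k))).filter (fun T => t < -Wf T)) := by
      intro T hT
      rw [Finset.mem_filter] at hT
      obtain ⟨hT1, hT2⟩ := hT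
      rw [← hXT, ← hXU] at hT2
      have habs : t < |Wf T| := by
        rw [hWf T, htdef, hndef]
        exact hT2
      rw [Finset.mem_union, Finset.mem_filter, Finset.mem_filter]
      rcases lt_abs.1 habs with h | h
      · exact Or.inl ⟨hT1, h⟩
      · exact Or.inr ⟨hT1, h⟩
    have hcard : (((Finset.powersetCard s (Finset.univ : Finset (Fin k))).filter fun T =>
          4 * c * Real.sqrt (Tstar.card) * ((Tstar.sup a : ℕ) : ℝ) <
            |(∑ i ∈ T ∩ Tstar, (a i : ℝ)) - (s / k : ℝ) * ∑ i ∈ Tstar, (a i : ℝ)|).card : ℝ)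
        ≤ 2 * ((powersetCard s (univ : Finset (Fin k))).card : ℝ)
            * Real.exp (-(t^2 / ((Tstar.card : ℝ) * M^2))) := by
      have h1 := Finset.card_le_card hsub
      have h2 := Finset.card_union_le
        ((powersetCard s (univ : Finset (Fin k))).filter (fun T => t < Wf T))
        ((powersetCard s (univ : Finset (Fin k))).filter (fun T => t < -Wf T))
      have h3 : (((Finset.powersetCard s (Finset.univ : Finset (Fin k))).filter fun T =>
            4 * c * Real.sqrt (Tstar.card) * ((Tstar.sup a : ℕ) : ℝ) <
              |(∑ i ∈ T ∩ Tstar, (a i : ℝ)) - (s / k : ℝ) * ∑ i ∈ Tstar, (a i : ℝ)|).card : ℝ)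
          ≤ (((powersetCard s (univ : Finset (Fin k))).filter (fun T => t < Wf T)).card : ℝ)
            + (((powersetCard s (univ : Finset (Fin k))).filter (fun T => t < -Wf T)).card : ℝ) := by
        have := h1.trans h2
        exact_mod_cast this
      linarith [hup, hdown]
    -- exponent computation
    have hexp_eq : -(t^2 / ((Tstar.card : ℝ) * M^2)) = -(16 * c^2) := by
      have h1 : t^2 = 16 * c^2 * nr * M^2 := by
        rw [htdef]
        have := Real.sq_sqrt hnpos.le
        nlinarith [this]
      rw [h1, ← hndef]
      field_simp
    rw [hexp_eq] at hcard
    have h2e : 2 * Real.exp (-(16 * c^2)) ≤ Real.exp (-c) := numeric_step c hc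
    have hN : (0:ℝ) < ((powersetCard s (univ : Finset (Fin k))).card : ℝ) := by
      rw [Finset.card_powersetCard, Finset.card_univ, Fintype.card_fin]
      exact_mod_cast Nat.choose_pos hs
    rw [div_le_iff₀ hN]
    refine hcard.trans ?_
    have hfin := mul_le_mul_of_nonneg_right h2e hN.le
    calc 2 * ((powersetCard s (univ : Finset (Fin k))).card : ℝ) * Real.exp (-(16 * c^2))
        = (2 * Real.exp (-(16 * c^2))) * ((powersetCard s (univ : Finset (Fin k))).card : ℝ) := by
          ring
      _ ≤ Real.exp (-c) * ((powersetCard s (univ : Finset (Fin k))).card : ℝ) := hfin
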